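/- For all n ≥ 0, the coefficient c_n = -1/(n+1) + ∑_{k=0}^{n} 1/((2n-2k+1)(k+1)(2k+1)) is ≤ 0; equivalently c_n = (2/((n+1)(2n+3)))·((n+2)∑_{k=1}^n 1/(2k+1) - (n+1)∑_{k=1}^n 1/(2k)) for n > 1. -/

import Mathlib

noncomputable def ccoef (n : ℕ) : ℝ :=
  -(1 / ((n : ℝ) + 1)) +
    ∑ k ∈ Finset.range (n + 1),
      1 / ((2 * (n : ℝ) - 2 * (k : ℝ) + 1) * ((k : ℝ) + 1) * (2 * (k : ℝ) + 1))

noncomputable def So (n : ℕ) : ℝ := ∑ k ∈ Finset.Icc 1 n, (1 : ℝ) / (2 * k + 1)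
noncomputable def Se (n : ℕ) : ℝ := ∑ k ∈ Finset.Icc 1 n, (1 : ℝ) / (2 * k)

lemma So_succ (n : ℕ) : So (n + 1) = So n + 1 / (2 * ((n : ℝ) + 1) + 1) := by
  unfold So
  rw [Finset.sum_Icc_succ_top (by omega)]
  push_cast
  ring

lemma Se_succ (n : ℕ) : Se (n + 1) = Se n + 1 / (2 * ((n : ℝ) + 1)) := by
  unfold Se
  rw [Finset.sum_Icc_succ_top (by omega)]
  push_cast
  ring

lemma L1 (n : ℕ) : ∑ k ∈ Finset.range (n + 1), (1 : ℝ) / (2 * k + 1) = 1 + So n := by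
  induction n with
  | zero => simp [So]
  | succ n ih =>
      rw [Finset.sum_range_succ, ih, So_succ]
      push_cast
      ring

lemma L2 (n : ℕ) :
    ∑ k ∈ Finset.range (n + 1), (1 : ℝ) / (k + 1) = 2 * Se n + 1 / ((n : ℝ) + 1) := by
  induction n with
  | zero => simp [Se]
  | succ n ih =>
      rw [Finset.sum_range_succ, ih, Se_succ]
      push_cast
      have h1 : (n : ℝ) + 1 ≠ 0 := by positivity
      have h2 : (n : ℝ) + 1 + 1 ≠ 0 := by positivity
      field_simp


lemma pfrac (x y : ℝ) (h1 : 2 * x - 2 * y + 1 ≠ 0) (h2 : y + 1 ≠ 0) (h3 : 2 * y + 1 ≠ 0)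
    (hn1 : x + 1 ≠ 0) (hn3 : 2 * x + 3 ≠ 0) :
    1 / ((2 * x - 2 * y + 1) * (y + 1) * (2 * y + 1))
      = (1 / ((x + 1) * (2 * x + 3))) * (1 / (2 * (x - y) + 1))
        - (1 / (2 * x + 3)) * (1 / (y + 1))
        + (1 / (x + 1)) * (1 / (2 * y + 1)) := by
  have h1' : 2 * (x - y) + 1 ≠ 0 := by intro h; apply h1; linarith
  have d1 : (x + 1) * (2 * x + 3) * (2 * (x - y) + 1) ≠ 0 :=
    mul_ne_zero (mul_ne_zero hn1 hn3) h1'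
  have d2 : (2 * x + 3) * (y + 1) ≠ 0 := mul_ne_zero hn3 h2
  have d3 : (x + 1) * (2 * y + 1) ≠ 0 := mul_ne_zero hn1 h3
  rw [div_mul_div_comm, div_mul_div_comm, div_mul_div_comm,
    div_sub_div _ _ d1 d2, div_add_div _ _ (mul_ne_zero d1 d2) d3,
    div_eq_div_iff (mul_ne_zero (mul_ne_zero h1 h2) h3) (mul_ne_zero (mul_ne_zero d1 d2) d3)]
  ring

lemma key (n : ℕ) :
    ccoef n = (2 / (((n : ℝ) + 1) * (2 * (n : ℝ) + 3))) *
      (((n : ℝ) + 2) * So n - ((n : ℝ) + 1) * Se n) := by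
  have hn1 : (n : ℝ) + 1 ≠ 0 := by positivity
  have hn3 : 2 * (n : ℝ) + 3 ≠ 0 := by positivity
  unfold ccoef
  have hsplit : ∑ k ∈ Finset.range (n + 1),
      1 / ((2 * (n : ℝ) - 2 * (k : ℝ) + 1) * ((k : ℝ) + 1) * (2 * (k : ℝ) + 1))
      = ∑ k ∈ Finset.range (n + 1),
        ((1 / (((n : ℝ) + 1) * (2 * (n : ℝ) + 3))) * (1 / (2 * ((n - k : ℕ) : ℝ) + 1))
          - (1 / (2 * (n : ℝ) + 3)) * (1 / ((k : ℝ) + 1))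
          + (1 / ((n : ℝ) + 1)) * (1 / (2 * (k : ℝ) + 1))) := by
    apply Finset.sum_congr rfl
    intro k hk
    have hk' : k ≤ n := Nat.lt_succ_iff.mp (Finset.mem_range.mp hk)
    have hc : ((n - k : ℕ) : ℝ) = (n : ℝ) - k := Nat.cast_sub hk'
    have hkn : (k : ℝ) ≤ n := Nat.cast_le.mpr hk'
    have h1 : 2 * (n : ℝ) - 2 * k + 1 ≠ 0 := by
      have : (0 : ℝ) < 2 * (n : ℝ) - 2 * k + 1 := by linarith
      linarith
    have h2 : (k : ℝ) + 1 ≠ 0 := by positivity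
    have h3 : 2 * (k : ℝ) + 1 ≠ 0 := by positivity
    rw [hc, pfrac (n : ℝ) (k : ℝ) h1 h2 h3 hn1 hn3]
  rw [hsplit]
  rw [Finset.sum_add_distrib, Finset.sum_sub_distrib, ← Finset.mul_sum, ← Finset.mul_sum,
    ← Finset.mul_sum]
  have hrefl : ∑ k ∈ Finset.range (n + 1), (1 : ℝ) / (2 * ((n - k : ℕ) : ℝ) + 1)
      = ∑ k ∈ Finset.range (n + 1), (1 : ℝ) / (2 * (k : ℝ) + 1) :=
    Finset.sum_range_reflect (fun j => (1 : ℝ) / (2 * (j : ℝ) + 1)) (n + 1)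
  rw [hrefl, L1 n, L2 n]
  field_simp
  ring

lemma hD (n : ℕ) : (n : ℝ) / ((2 * n + 2) * (2 * n + 3)) ≤ Se n - So n := by
  induction n with
  | zero => simp [Se, So]
  | succ n ih =>
      rw [Se_succ, So_succ]
      have h1 : (0 : ℝ) < 2 * (n : ℝ) + 2 := by positivity
      have h2 : (0 : ℝ) < 2 * (n : ℝ) + 3 := by positivity
      have h3 : (0 : ℝ) < 2 * (n : ℝ) + 4 := by positivity
      have h4 : (0 : ℝ) < 2 * (n : ℝ) + 5 := by positivity
      have hn : (0 : ℝ) ≤ (n : ℝ) := Nat.cast_nonneg n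
      have step : 1 / (2 * ((n : ℝ) + 1)) - 1 / (2 * ((n : ℝ) + 1) + 1)
          = 1 / ((2 * n + 2) * (2 * n + 3)) := by
        field_simp
        ring
      push_cast
      rw [show (2 * ((n:ℝ) + 1) + 2) = 2 * n + 4 by ring,
          show (2 * ((n:ℝ) + 1) + 3) = 2 * n + 5 by ring]
      have key2 : ((n : ℝ) + 1) / ((2 * n + 4) * (2 * n + 5))
          ≤ (n : ℝ) / ((2 * n + 2) * (2 * n + 3)) + 1 / ((2 * n + 2) * (2 * n + 3)) := by
        rw [← add_div]
        apply div_le_div_of_nonneg_left (by linarith) (by positivity)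
        nlinarith
      linarith [step ▸ (by linarith [ih] :
        (n : ℝ) / ((2 * n + 2) * (2 * n + 3)) + (1 / (2 * ((n : ℝ) + 1)) - 1 / (2 * ((n : ℝ) + 1) + 1))
          ≤ Se n + 1 / (2 * ((n : ℝ) + 1)) - (So n + 1 / (2 * ((n : ℝ) + 1) + 1)))]

lemma hT (n : ℕ) : ((n : ℝ) + 2) * So n ≤ ((n : ℝ) + 1) * Se n := by
  induction n with
  | zero => simp [Se, So]
  | succ n ih =>
      rw [Se_succ, So_succ]
      push_cast
      have hd := hD n
      have h1 : (0 : ℝ) < 2 * (n : ℝ) + 2 := by positivity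
      have h2 : (0 : ℝ) < 2 * (n : ℝ) + 3 := by positivity
      have e1 : ((n : ℝ) + 3) * (1 / (2 * ((n : ℝ) + 1) + 1))
            - ((n : ℝ) + 2) * (1 / (2 * ((n : ℝ) + 1)))
          = (n : ℝ) / ((2 * n + 2) * (2 * n + 3)) := by
        field_simp
        ring
      have g1 : ((n : ℝ) + 1 + 2) * (So n + 1 / (2 * ((n : ℝ) + 1) + 1))
          = ((n : ℝ) + 2) * So n + So n + ((n : ℝ) + 3) * (1 / (2 * ((n : ℝ) + 1) + 1)) := by
        ring
      have g2 : ((n : ℝ) + 1 + 1) * (Se n + 1 / (2 * ((n : ℝ) + 1)))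
          = ((n : ℝ) + 1) * Se n + Se n + ((n : ℝ) + 2) * (1 / (2 * ((n : ℝ) + 1))) := by
        ring
      rw [g1, g2]
      linarith [hd, ih, e1]

theorem stmt13 (n : ℕ) :
    ccoef n ≤ 0 ∧
    (1 < n →
      ccoef n =
        (2 / (((n : ℝ) + 1) * (2 * (n : ℝ) + 3))) *
          (((n : ℝ) + 2) * ∑ k ∈ Finset.Icc 1 n, (1 : ℝ) / (2 * k + 1) -
            ((n : ℝ) + 1) * ∑ k ∈ Finset.Icc 1 n, (1 : ℝ) / (2 * k))) := by
  constructor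
  · rw [key n]
    have h := hT n
    have hpos : (0 : ℝ) < ((n : ℝ) + 1) * (2 * (n : ℝ) + 3) := by positivity
    have : ((n : ℝ) + 2) * So n - ((n : ℝ) + 1) * Se n ≤ 0 := by linarith
    have h2 : (0 : ℝ) ≤ 2 / (((n : ℝ) + 1) * (2 * (n : ℝ) + 3)) := by positivity
    exact mul_nonpos_of_nonneg_of_nonpos h2 this
  · intro _
    exact key n
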